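/- Let X be a functionally Hausdorff space which is a continuous image of a Čech-complete space P. Then either the cardinality of X is at most max{l(P), ψ(X)}, or the cardinality of X is at least 𝔠. -/

import Mathlib

open Cardinal Set Topology

universe u

def FunctionallyHausdorff (X : Type u) [TopologicalSpace X] : Prop :=
  ∀ x y : X, x ≠ y → ∃ f : X → unitInterval, Continuous f ∧ f x = 0 ∧ f y = 1

def IsCechComplete (X : Type u) [TopologicalSpace X] : Prop :=
  ∃ (K : Type u) (_ : TopologicalSpace K) (e : X → K),
    CompactSpace K ∧ T2Space K ∧ IsEmbedding e ∧ DenseRange e ∧ IsGδ (Set.range e)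

noncomputable def lindelofNumber (X : Type u) [TopologicalSpace X] : Cardinal.{u} :=
  sInf {κ : Cardinal.{u} | ℵ₀ ≤ κ ∧ ∀ U : Set (Set X), (∀ u ∈ U, IsOpen u) → ⋃₀ U = Set.univ →
    ∃ V ⊆ U, #↥V ≤ κ ∧ ⋃₀ V = Set.univ}

noncomputable def pseudocharacter (X : Type u) [TopologicalSpace X] : Cardinal.{u} :=
  sInf {κ : Cardinal.{u} | ℵ₀ ≤ κ ∧ ∀ x : X, ∃ 𝒰 : Set (Set X),
    #↥𝒰 ≤ κ ∧ (∀ U ∈ 𝒰, IsOpen U ∧ x ∈ U) ∧ ⋂₀ 𝒰 = ⋂₀ {U : Set X | IsOpen U ∧ x ∈ U}}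

def IsScatteredSet {X : Type u} [TopologicalSpace X] (S : Set X) : Prop :=
  ∀ T ⊆ S, T.Nonempty → ∃ x ∈ T, ∃ U : Set X, IsOpen U ∧ U ∩ T = {x}

def IsKAnalytic (X : Type u) [TopologicalSpace X] : Prop :=
  ∃ (P : Type u) (_ : TopologicalSpace P) (f : P → X),
    LindelofSpace P ∧ IsCechComplete P ∧ Continuous f ∧ Function.Surjective f

def IsAnalyticSpace (X : Type u) [TopologicalSpace X] : Prop :=
  ∃ (P : Type u) (_ : TopologicalSpace P), PolishSpace P ∧
    ∃ f : P → X, Continuous f ∧ Function.Surjective f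

noncomputable def boundingNumber : Cardinal.{0} :=
  sInf {κ : Cardinal.{0} | ∃ B : Set (ℕ → ℕ), #↥B = κ ∧
    ∀ y : ℕ → ℕ, ∃ x ∈ B, {n : ℕ | ¬ x n ≤ y n}.Infinite}

set_option linter.unusedSectionVars false

namespace Stmt5Aux

variable {X K : Type u} [TopologicalSpace X] [TopologicalSpace K]

def lev (f : X → unitInterval) (t : ℝ) : Set X := {x | (f x : ℝ) ≤ t}

def lev' (f : X → unitInterval) (t : ℝ) : Set X := {x | t ≤ (f x : ℝ)}

theorem isClosed_lev {f : X → unitInterval} (hf : Continuous f) (t : ℝ) :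
    IsClosed (lev f t) :=
  IsClosed.preimage (continuous_subtype_val.comp hf) isClosed_Iic

theorem isClosed_lev' {f : X → unitInterval} (hf : Continuous f) (t : ℝ) :
    IsClosed (lev' f t) :=
  IsClosed.preimage (continuous_subtype_val.comp hf) isClosed_Ici

def dich (κ : Cardinal.{u}) (W : Set X) : Prop :=
  ∀ f : X → unitInterval, Continuous f → ∀ a b : ℝ, a < b →
    #↥(W ∩ lev f a) ≤ κ ∨ #↥(W ∩ lev' f b) ≤ κ

theorem dich_mono {κ : Cardinal.{u}} {W W' : Set X} (h : W ⊆ W') (hd : dich κ W') :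
    dich κ W := fun f hf a b hab =>
  (hd f hf a b hab).imp
    (fun h' => le_trans (mk_le_mk_of_subset (inter_subset_inter_left _ h)) h')
    (fun h' => le_trans (mk_le_mk_of_subset (inter_subset_inter_left _ h)) h')

noncomputable def aconc (κ : Cardinal.{u}) (W : Set X) (f : X → unitInterval) : ℝ :=
  sInf {t : ℝ | κ < #↥(W ∩ lev f t)}

def big (κ : Cardinal.{u}) (G : K → X) (Q C : Set K) : Prop := κ < #↥(G '' (C ∩ Q))

theorem big_mono {κ : Cardinal.{u}} {G : K → X} {Q : Set K} {C C' : Set K}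
    (h : C ⊆ C') (hC : big κ G Q C) : big κ G Q C' :=
  lt_of_lt_of_le hC (mk_le_mk_of_subset (image_mono  (inter_subset_inter_left _ h)))

theorem big_nonempty {κ : Cardinal.{u}} {G : K → X} {Q C : Set K} (hC : big κ G Q C) :
    C.Nonempty := by
  have hC' : κ < #↥(G '' (C ∩ Q)) := hC
  have h0 : #↥(G '' (C ∩ Q)) ≠ 0 := by
    intro h
    rw [h] at hC'
    exact absurd hC' (by simp)
  have hne : (G '' (C ∩ Q)).Nonempty := by
    rw [← nonempty_coe_sort]
    exact Cardinal.mk_ne_zero_iff.1 h0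
  obtain ⟨x, q, hq, -⟩ := hne
  exact ⟨q, hq.1⟩

theorem trace {G : K → X} {Q : Set K} (hGQ : ContinuousOn G Q) {Z : Set K} (hZQ : Z ⊆ Q)
    {F : Set X} (hF : IsClosed F) (hZF : Z ⊆ G ⁻¹' F) {q : K} (hq : q ∈ closure Z)
    (hqQ : q ∈ Q) : G q ∈ F := by
  by_contra hGq
  have h1 : G ⁻¹' Fᶜ ∈ nhdsWithin q Q := hGQ q hqQ (hF.isOpen_compl.mem_nhds hGq)
  rcases mem_nhdsWithin.1 h1 with ⟨O, hO, hqO, hsub⟩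
  rcases mem_closure_iff.1 hq O hO hqO with ⟨z, hzO, hzZ⟩
  exact hsub ⟨hzO, hZQ hzZ⟩ (hZF hzZ)

theorem conc_small {κ : Cardinal.{u}} (hκ : ℵ₀ ≤ κ) {W : Set X} (hW : κ < #↥W)
    (hd : dich κ W) {f : X → unitInterval} (hf : Continuous f) {ε : ℝ} (hε : 0 < ε) :
    #↥(W \ {x | |(f x : ℝ) - aconc κ W f| < ε}) ≤ κ := by
  set B := {t : ℝ | κ < #↥(W ∩ lev f t)} with hB
  have h1 : (1 : ℝ) ∈ B := by
    have he : W ∩ lev f 1 = W := inter_eq_self_of_subset_left (fun x _ => (f x).2.2)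
    show κ < #↥(W ∩ lev f 1)
    rw [he]; exact hW
  have hBne : B.Nonempty := ⟨1, h1⟩
  have hBbdd : BddBelow B := by
    refine ⟨0, fun t ht => ?_⟩
    have ht' : κ < #↥(W ∩ lev f t) := ht
    have h0 : #↥(W ∩ lev f t) ≠ 0 := by
      intro h; rw [h] at ht'; exact absurd ht' (by simp)
    obtain ⟨x, -, hx2⟩ := Cardinal.mk_ne_zero_iff.1 h0
    exact le_trans (f x).2.1 hx2
  set a := aconc κ W f with ha
  have haInf : a = sInf B := rfl
  have hp1 : #↥(W ∩ lev f (a - ε)) ≤ κ := by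
    by_contra h
    have hmem : a - ε ∈ B := not_le.1 h
    have := csInf_le hBbdd hmem
    rw [← haInf] at this
    linarith
  have hp2 : #↥(W ∩ lev' f (a + ε)) ≤ κ := by
    obtain ⟨t, htB, htlt⟩ : ∃ t ∈ B, t < a + ε / 2 := by
      apply exists_lt_of_csInf_lt hBne
      rw [← haInf]; linarith
    have hbig : κ < #↥(W ∩ lev f (a + ε / 2)) :=
      lt_of_lt_of_le htB (mk_le_mk_of_subset
        (inter_subset_inter_right _ (fun x hx => le_trans hx htlt.le)))
    rcases hd f hf (a + ε / 2) (a + ε) (by linarith) with h | h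
    · exact absurd h (not_le.2 hbig)
    · exact h
  have hsub : (W \ {x | |(f x : ℝ) - a| < ε}) ⊆ (W ∩ lev f (a - ε)) ∪ (W ∩ lev' f (a + ε)) := by
    rintro x ⟨hxW, hx⟩
    rcases le_or_gt ((f x : ℝ)) (a - ε) with h | h
    · exact Or.inl ⟨hxW, h⟩
    · refine Or.inr ⟨hxW, ?_⟩
      by_contra h2
      rw [lev', mem_setOf_eq, not_le] at h2
      have habs : |(f x : ℝ) - a| < ε := abs_lt.2 ⟨by linarith, by linarith⟩
      exact hx habs
  calc #↥(W \ {x | |(f x : ℝ) - a| < ε})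
      ≤ #↥((W ∩ lev f (a - ε)) ∪ (W ∩ lev' f (a + ε))) := mk_le_mk_of_subset hsub
    _ ≤ #↥(W ∩ lev f (a - ε)) + #↥(W ∩ lev' f (a + ε)) := mk_union_le _ _
    _ ≤ κ := Cardinal.add_le_of_le hκ hp1 hp2

theorem exists_big_piece {κ : Cardinal.{u}} {G : K → X} {Q : Set K} (hκ : ℵ₀ ≤ κ)
    {C : Set K} (hC : big κ G Q C) {𝒱 : Set (Set K)} (hcard : #↥𝒱 ≤ κ)
    (hcover : C ∩ Q ⊆ ⋃₀ 𝒱) : ∃ V ∈ 𝒱, κ < #↥(G '' (V ∩ (C ∩ Q))) := by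
  by_contra h
  push_neg at h
  have hC' : κ < #↥(G '' (C ∩ Q)) := hC
  rcases eq_empty_or_nonempty 𝒱 with hne | hne
  · subst hne
    have : C ∩ Q = ∅ := by
      rw [← subset_empty_iff]
      simpa using hcover
    rw [this] at hC'
    simp at hC'
  · have : Nonempty ↥𝒱 := nonempty_coe_sort.2 hne
    have hsub : G '' (C ∩ Q) ⊆ ⋃ V ∈ 𝒱, G '' (V ∩ (C ∩ Q)) := by
      rintro x ⟨q, hq, rfl⟩
      rcases hcover hq with ⟨V, hV, hqV⟩
      exact mem_biUnion hV ⟨q, ⟨hqV, hq⟩, rfl⟩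
    have h1 : #↥(G '' (C ∩ Q)) ≤ κ := by
      calc #↥(G '' (C ∩ Q)) ≤ #↥(⋃ V ∈ 𝒱, G '' (V ∩ (C ∩ Q))) := mk_le_mk_of_subset hsub
        _ ≤ #↥𝒱 * ⨆ V : ↥𝒱, #↥(G '' (V.1 ∩ (C ∩ Q))) := mk_biUnion_le _ _
        _ ≤ κ * κ := mul_le_mul' hcard (ciSup_le' fun V => h V.1 V.2)
        _ = κ := Cardinal.mul_eq_self hκ
    exact absurd h1 (not_le.2 hC')

variable [CompactSpace K] [T2Space K]

theorem shrink {κ : Cardinal.{u}} {G : K → X} {Q : Set K} (hκ : ℵ₀ ≤ κ)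
    (hL : ∀ C : Set K, IsClosed C → ∀ 𝒱 : Set (Set K), (∀ V ∈ 𝒱, IsOpen V) →
      C ∩ Q ⊆ ⋃₀ 𝒱 → ∃ 𝒱' ⊆ 𝒱, #↥𝒱' ≤ κ ∧ C ∩ Q ⊆ ⋃₀ 𝒱')
    {C : Set K} (hCc : IsClosed C) (hC : big κ G Q C) {W : Set K} (hWo : IsOpen W)
    (hCW : C ∩ Q ⊆ W) : ∃ C', IsClosed C' ∧ C' ⊆ C ∧ C' ⊆ W ∧ big κ G Q C' := by
  have hcover : C ∩ Q ⊆ ⋃₀ {V : Set K | IsOpen V ∧ closure V ⊆ W} := by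
    intro q hq
    have hWq : W ∈ nhds q := hWo.mem_nhds (hCW hq)
    rcases exists_mem_nhds_isClosed_subset hWq with ⟨F, hF𝓝, hFc, hFW⟩
    exact ⟨interior F, ⟨isOpen_interior, (closure_minimal interior_subset hFc).trans hFW⟩,
      mem_interior_iff_mem_nhds.2 hF𝓝⟩
  rcases hL C hCc _ (fun V hV => hV.1) hcover with ⟨𝒱', h𝒱'sub, h𝒱'card, h𝒱'cover⟩
  rcases exists_big_piece hκ hC h𝒱'card h𝒱'cover with ⟨V, hV, hbig⟩
  refine ⟨closure (V ∩ (C ∩ Q)), isClosed_closure, ?_, ?_, ?_⟩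
  · exact closure_minimal (fun x hx => hx.2.1) hCc
  · exact (closure_mono inter_subset_left).trans (h𝒱'sub hV).2
  · show κ < #↥(G '' (closure (V ∩ (C ∩ Q)) ∩ Q))
    refine lt_of_lt_of_le hbig (mk_le_mk_of_subset (image_mono  ?_))
    exact fun z hz => ⟨subset_closure hz, hz.2.2⟩

def iterChain (F : Set K → ℕ → Set K) (D : Set K) : ℕ → Set K
  | 0 => D
  | n + 1 => F (iterChain F D n) n

theorem exists_chain {κ : Cardinal.{u}} {G : K → X} {Q : Set K} {Gn : ℕ → Set K}
    (hκ : ℵ₀ ≤ κ)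
    (hL : ∀ C : Set K, IsClosed C → ∀ 𝒱 : Set (Set K), (∀ V ∈ 𝒱, IsOpen V) →
      C ∩ Q ⊆ ⋃₀ 𝒱 → ∃ 𝒱' ⊆ 𝒱, #↥𝒱' ≤ κ ∧ C ∩ Q ⊆ ⋃₀ 𝒱')
    (hGo : ∀ n, IsOpen (Gn n)) (hQsub : ∀ n, Q ⊆ Gn n)
    {D : Set K} (hDc : IsClosed D) (hD : big κ G Q D) :
    ∃ Cs : ℕ → Set K, Cs 0 = D ∧ (∀ n, IsClosed (Cs n) ∧ big κ G Q (Cs n)) ∧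
      (∀ n, Cs (n + 1) ⊆ Cs n ∧ Cs (n + 1) ⊆ Gn n) := by
  have hstep : ∀ (C : Set K) (n : ℕ), ∃ C' : Set K,
      (IsClosed C ∧ big κ G Q C) → (IsClosed C' ∧ C' ⊆ C ∧ C' ⊆ Gn n ∧ big κ G Q C') := by
    intro C n
    by_cases h : IsClosed C ∧ big κ G Q C
    · rcases shrink hκ hL h.1 h.2 (hGo n) (fun q hq => hQsub n hq.2) with ⟨C', h1, h2, h3, h4⟩
      exact ⟨C', fun _ => ⟨h1, h2, h3, h4⟩⟩
    · exact ⟨∅, fun h' => absurd h' h⟩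
  choose F hF using hstep
  refine ⟨iterChain F D, rfl, ?_, ?_⟩
  · have key : ∀ n, IsClosed (iterChain F D n) ∧ big κ G Q (iterChain F D n) := by
      intro n
      induction n with
      | zero => exact ⟨hDc, hD⟩
      | succ n ih =>
        have := hF (iterChain F D n) n ih
        exact ⟨this.1, this.2.2.2⟩
    exact key
  · intro n
    have key : ∀ n, IsClosed (iterChain F D n) ∧ big κ G Q (iterChain F D n) := by
      intro n
      induction n with
      | zero => exact ⟨hDc, hD⟩
      | succ n ih =>
        have := hF (iterChain F D n) n ih
        exact ⟨this.1, this.2.2.2⟩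
    have := hF (iterChain F D n) n (key n)
    exact ⟨this.2.1, this.2.2.1⟩

theorem conc_point {κ : Cardinal.{u}} {G : K → X} {Q : Set K} {Gn : ℕ → Set K}
    (hκ : ℵ₀ ≤ κ) (hGQ : ContinuousOn G Q)
    (hL : ∀ C : Set K, IsClosed C → ∀ 𝒱 : Set (Set K), (∀ V ∈ 𝒱, IsOpen V) →
      C ∩ Q ⊆ ⋃₀ 𝒱 → ∃ 𝒱' ⊆ 𝒱, #↥𝒱' ≤ κ ∧ C ∩ Q ⊆ ⋃₀ 𝒱')
    (hGo : ∀ n, IsOpen (Gn n)) (hQ : Q = ⋂ n, Gn n)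
    {D : Set K} (hDc : IsClosed D) (hD : big κ G Q D)
    (hd : dich κ (G '' (D ∩ Q))) :
    ∃ q ∈ D ∩ Q, ∀ f : X → unitInterval, Continuous f →
      ((f (G q) : ℝ)) = aconc κ (G '' (D ∩ Q)) f := by
  have hQsub : ∀ n, Q ⊆ Gn n := fun n q hq => by rw [hQ] at hq; exact mem_iInter.1 hq n
  obtain ⟨Cs, hCs0, hinv, hchain⟩ := exists_chain hκ hL hGo hQsub hDc hD
  set W := G '' (D ∩ Q) with hWdef
  have hWbig : κ < #↥W := hD
  have hanti : ∀ n m : ℕ, m ≤ n → Cs n ⊆ Cs m := by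
    intro n
    induction n with
    | zero => intro m hm; rw [Nat.le_zero.1 hm]
    | succ n ih =>
      intro m hm
      rcases Nat.eq_or_lt_of_le hm with he | hlt
      · rw [he]
      · exact ((hchain n).1).trans (ih m (Nat.lt_succ_iff.1 hlt))
  set ball : {f : X → unitInterval // Continuous f} → ℕ → Set X :=
    fun f k => {x | |((f.1 x : ℝ)) - aconc κ W f.1| < 1 / ((k : ℝ) + 1)} with hballdef
  set Dset : ({f : X → unitInterval // Continuous f} × ℕ × ℕ) → Set K :=
    fun i => Cs i.2.2 ∩ Q ∩ G ⁻¹' (ball i.1 i.2.1) with hDsetdef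
  have hball_small : ∀ (f : {f : X → unitInterval // Continuous f}) (k : ℕ),
      #↥(W \ ball f k) ≤ κ := fun f k =>
    conc_small hκ hWbig hd f.2 (by positivity)
  have hfip : ∀ u : Finset ({f : X → unitInterval // Continuous f} × ℕ × ℕ),
      (Set.univ ∩ ⋂ i ∈ u, closure (Dset i)).Nonempty := by
    intro u
    set N := u.sup (fun i => i.2.2) with hN
    have hbigN : κ < #↥(G '' (Cs N ∩ Q)) := (hinv N).2
    have hsubW : G '' (Cs N ∩ Q) ⊆ W := by
      rw [hWdef, ← hCs0]
      exact image_mono (inter_subset_inter_left _ (hanti N 0 (Nat.zero_le N)))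
    have hex : ∃ x ∈ G '' (Cs N ∩ Q), ∀ i ∈ u, x ∈ ball i.1 i.2.1 := by
      by_contra h
      push_neg at h
      have hsub : G '' (Cs N ∩ Q) ⊆ ⋃ i ∈ (u : Set ({f : X → unitInterval // Continuous f} × ℕ × ℕ)), (W \ ball i.1 i.2.1) := by
        intro x hx
        obtain ⟨i, hiu, hxi⟩ := h x hx
        exact mem_biUnion hiu ⟨hsubW hx, hxi⟩
      have hle : #↥(G '' (Cs N ∩ Q)) ≤ κ := by
        rcases (u : Set ({f : X → unitInterval // Continuous f} × ℕ × ℕ)).eq_empty_or_nonempty with he | he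
        · rw [he] at hsub
          simp only [biUnion_empty, subset_empty_iff] at hsub
          rw [hsub, Cardinal.mk_emptyCollection]
          exact zero_le
        · have : Nonempty ↥(u : Set ({f : X → unitInterval // Continuous f} × ℕ × ℕ)) := nonempty_coe_sort.2 he
          calc #↥(G '' (Cs N ∩ Q))
              ≤ #↥(⋃ i ∈ (u : Set ({f : X → unitInterval // Continuous f} × ℕ × ℕ)), (W \ ball i.1 i.2.1)) := mk_le_mk_of_subset hsub
            _ ≤ #↥(u : Set ({f : X → unitInterval // Continuous f} × ℕ × ℕ)) * ⨆ i : ↥(u : Set ({f : X → unitInterval // Continuous f} × ℕ × ℕ)), #↥(W \ ball i.1.1 i.1.2.1) := mk_biUnion_le _ _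
            _ ≤ κ * κ := mul_le_mul' (le_of_lt (lt_of_lt_of_le (finset_card_lt_aleph0 u) hκ)) (ciSup_le' fun i => hball_small i.1.1 i.1.2.1)
            _ = κ := Cardinal.mul_eq_self hκ
      exact absurd hle (not_le.2 hbigN)
    obtain ⟨x, hxmem, hxball⟩ := hex
    obtain ⟨qx, hqx, rfl⟩ := hxmem
    refine ⟨qx, mem_univ qx, ?_⟩
    rw [mem_iInter₂]
    intro i hiu
    apply subset_closure
    exact ⟨⟨hanti N i.2.2 (hN ▸ Finset.le_sup (f := fun i => i.2.2) hiu) hqx.1, hqx.2⟩, hxball i hiu⟩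
  obtain ⟨q, hq⟩ : (Set.univ ∩ ⋂ i, closure (Dset i)).Nonempty := by
    by_contra h
    rw [not_nonempty_iff_eq_empty] at h
    obtain ⟨u, hu⟩ := isCompact_univ.elim_finite_subfamily_closed
      (fun i => closure (Dset i)) (fun i => isClosed_closure) h
    exact absurd hu (nonempty_iff_ne_empty.1 (hfip u))
  have hqi : ∀ i, q ∈ closure (Dset i) := by
    have h2 := hq.2
    rw [mem_iInter] at h2
    exact h2
  have hCsclosed : ∀ n, IsClosed (Cs n) := fun n => (hinv n).1
  have hqCs : ∀ n, q ∈ Cs n := by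
    intro n
    have h1 := hqi ⟨⟨fun _ => 0, continuous_const⟩, 0, n⟩
    have h2 : closure (Dset ⟨⟨fun _ => 0, continuous_const⟩, 0, n⟩) ⊆ Cs n :=
      closure_minimal (fun z hz => hz.1.1) (hCsclosed n)
    exact h2 h1
  have hqQ : q ∈ Q := by
    rw [hQ]; exact mem_iInter.2 fun n => (hchain n).2 (hqCs (n + 1))
  have hqD : q ∈ D := by rw [← hCs0]; exact hqCs 0
  refine ⟨q, ⟨hqD, hqQ⟩, ?_⟩
  intro f hf
  have key : ∀ k : ℕ, |((f (G q) : ℝ)) - aconc κ W f| ≤ 1 / ((k : ℝ) + 1) := by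
    intro k
    have h1 := hqi ⟨⟨f, hf⟩, k, 0⟩
    have hZQ : Dset ⟨⟨f, hf⟩, k, 0⟩ ⊆ Q := fun z hz => hz.1.2
    have hZF : Dset ⟨⟨f, hf⟩, k, 0⟩ ⊆
        G ⁻¹' {x | |((f x : ℝ)) - aconc κ W f| ≤ 1 / ((k : ℝ) + 1)} :=
      fun z hz => by
        have h3 : |((f (G z) : ℝ)) - aconc κ W f| < 1 / ((k : ℝ) + 1) := hz.2
        exact le_of_lt h3
    have hFc : IsClosed {x : X | |((f x : ℝ)) - aconc κ W f| ≤ 1 / ((k : ℝ) + 1)} :=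
      IsClosed.preimage (((continuous_subtype_val.comp hf).sub continuous_const).abs) isClosed_Iic
    exact trace hGQ hZQ hFc hZF h1 hqQ
  by_contra hne
  have hpos : 0 < |((f (G q) : ℝ)) - aconc κ W f| := abs_pos.2 (sub_ne_zero.2 hne)
  obtain ⟨k, hk⟩ := exists_nat_one_div_lt hpos
  exact absurd (key k) (not_le.2 hk)

theorem split {κ : Cardinal.{u}} {G : K → X} {Q : Set K} {Gn : ℕ → Set K}
    (hκ : ℵ₀ ≤ κ) (hGQ : ContinuousOn G Q)
    (hL : ∀ C : Set K, IsClosed C → ∀ 𝒱 : Set (Set K), (∀ V ∈ 𝒱, IsOpen V) →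
      C ∩ Q ⊆ ⋃₀ 𝒱 → ∃ 𝒱' ⊆ 𝒱, #↥𝒱' ≤ κ ∧ C ∩ Q ⊆ ⋃₀ 𝒱')
    (hGo : ∀ n, IsOpen (Gn n)) (hQ : Q = ⋂ n, Gn n)
    (hFH : FunctionallyHausdorff X)
    (hpsi : ∀ x : X, ∃ 𝒰 : Set (Set X), #↥𝒰 ≤ κ ∧ (∀ U ∈ 𝒰, IsOpen U ∧ x ∈ U) ∧
      ⋂₀ 𝒰 = {x})
    {C : Set K} (hCc : IsClosed C) (hC : big κ G Q C) :
    ∃ C₀ C₁ : Set K, IsClosed C₀ ∧ IsClosed C₁ ∧ C₀ ⊆ C ∧ C₁ ⊆ C ∧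
      big κ G Q C₀ ∧ big κ G Q C₁ ∧ (G '' (C₀ ∩ Q)) ∩ (G '' (C₁ ∩ Q)) = ∅ := by
  set T := G '' (C ∩ Q) with hTdef
  have hTbig : κ < #↥T := hC
  by_cases hcase : ∃ f : X → unitInterval, Continuous f ∧ ∃ a b : ℝ, a < b ∧
      κ < #↥(T ∩ lev f a) ∧ κ < #↥(T ∩ lev' f b)
  · obtain ⟨f, hf, a, b, hab, hbig0, hbig1⟩ := hcase
    set Z₀ := C ∩ Q ∩ G ⁻¹' (lev f a) with hZ₀
    set Z₁ := C ∩ Q ∩ G ⁻¹' (lev' f b) with hZ₁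
    have hZ₀Q : Z₀ ⊆ Q := fun z hz => hz.1.2
    have hZ₁Q : Z₁ ⊆ Q := fun z hz => hz.1.2
    refine ⟨closure Z₀, closure Z₁, isClosed_closure, isClosed_closure,
      closure_minimal (fun z hz => hz.1.1) hCc, closure_minimal (fun z hz => hz.1.1) hCc,
      ?_, ?_, ?_⟩
    · show κ < #↥(G '' (closure Z₀ ∩ Q))
      refine lt_of_lt_of_le hbig0 (mk_le_mk_of_subset ?_)
      rintro x ⟨hxT, hxa⟩
      obtain ⟨qx, hqx, rfl⟩ := hxT
      exact ⟨qx, ⟨subset_closure ⟨hqx, hxa⟩, hqx.2⟩, rfl⟩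
    · show κ < #↥(G '' (closure Z₁ ∩ Q))
      refine lt_of_lt_of_le hbig1 (mk_le_mk_of_subset ?_)
      rintro x ⟨hxT, hxb⟩
      obtain ⟨qx, hqx, rfl⟩ := hxT
      exact ⟨qx, ⟨subset_closure ⟨hqx, hxb⟩, hqx.2⟩, rfl⟩
    · rw [eq_empty_iff_forall_notMem]
      rintro x ⟨⟨q0, hq0, rfl⟩, ⟨q1, hq1, he⟩⟩
      have hx0 : G q0 ∈ lev f a :=
        trace hGQ hZ₀Q (isClosed_lev hf a) (fun z hz => hz.2) hq0.1 hq0.2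
      have hx1 : G q1 ∈ lev' f b :=
        trace hGQ hZ₁Q (isClosed_lev' hf b) (fun z hz => hz.2) hq1.1 hq1.2
      rw [he] at hx1
      have h1 : (f (G q0) : ℝ) ≤ a := hx0
      have h2 : b ≤ (f (G q0) : ℝ) := hx1
      linarith
  · exfalso
    have hdT : dich κ T := by
      intro f hf a b hab
      by_contra h
      push_neg at h
      exact hcase ⟨f, hf, a, b, hab, h.1, h.2⟩
    obtain ⟨q0, ⟨hq0C, hq0Q⟩, hq0val⟩ := conc_point hκ hGQ hL hGo hQ hCc hC hdT
    set x₀ := G q0 with hx₀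
    obtain ⟨𝒰, h𝒰card, h𝒰open, h𝒰int⟩ := hpsi x₀
    have hTU : ∃ U ∈ 𝒰, κ < #↥(T \ U) := by
      by_contra h
      push_neg at h
      have hsub : T ⊆ {x₀} ∪ ⋃ U ∈ 𝒰, (T \ U) := by
        intro x hx
        by_cases hxx : x = x₀
        · exact Or.inl (by simp [hxx])
        · have hnot : x ∉ ⋂₀ 𝒰 := by
            rw [h𝒰int]
            simpa using hxx
          have hex2 : ∃ U ∈ 𝒰, x ∉ U := by
            by_contra hall
            push_neg at hall
            exact hnot fun U hU => hall U hU
          obtain ⟨U, hU, hxU⟩ := hex2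
          exact Or.inr (mem_biUnion hU ⟨hx, hxU⟩)
      have hle : #↥T ≤ κ := by
        have hb : #↥(⋃ U ∈ 𝒰, (T \ U)) ≤ κ := by
          rcases eq_empty_or_nonempty 𝒰 with he | hne
          · rw [he]
            simp only [biUnion_empty, Cardinal.mk_emptyCollection]
            exact zero_le
          · have : Nonempty ↥𝒰 := nonempty_coe_sort.2 hne
            calc #↥(⋃ U ∈ 𝒰, (T \ U))
                ≤ #↥𝒰 * ⨆ U : ↥𝒰, #↥(T \ U.1) := mk_biUnion_le _ _
              _ ≤ κ * κ := mul_le_mul' h𝒰card (ciSup_le' fun U => h U.1 U.2)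
              _ = κ := Cardinal.mul_eq_self hκ
        calc #↥T ≤ #↥({x₀} ∪ ⋃ U ∈ 𝒰, (T \ U) : Set X) := mk_le_mk_of_subset hsub
          _ ≤ #↥({x₀} : Set X) + #↥(⋃ U ∈ 𝒰, (T \ U)) := mk_union_le _ _
          _ ≤ κ := Cardinal.add_le_of_le hκ (by simpa using one_le_aleph0.trans hκ) hb
      exact absurd hle (not_le.2 hTbig)
    obtain ⟨U, hU𝒰, hSbig⟩ := hTU
    have hUopen : IsOpen U := (h𝒰open U hU𝒰).1
    have hx₀U : x₀ ∈ U := (h𝒰open U hU𝒰).2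
    set S := T \ U with hSdef
    set Z := C ∩ Q ∩ G ⁻¹' S with hZdef
    set D' := closure Z with hD'def
    have hZQ : Z ⊆ Q := fun z hz => hz.1.2
    have hD'c : IsClosed D' := isClosed_closure
    have hD'sub : D' ⊆ C := closure_minimal (fun z hz => hz.1.1) hCc
    have hD'img : G '' (D' ∩ Q) = S := by
      apply Subset.antisymm
      · rintro x ⟨qx, ⟨hq1, hq2⟩, rfl⟩
        constructor
        · exact ⟨qx, ⟨hD'sub hq1, hq2⟩, rfl⟩
        · have : G qx ∈ Uᶜ :=
            trace hGQ hZQ hUopen.isClosed_compl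
              (fun z hz => fun hzU => (hz.2).2 hzU) hq1 hq2
          exact this
      · intro x hx
        obtain ⟨qx, hqx, rfl⟩ := hx.1
        exact ⟨qx, ⟨subset_closure ⟨hqx, hx⟩, hqx.2⟩, rfl⟩
    have hD'big : big κ G Q D' := by
      show κ < #↥(G '' (D' ∩ Q))
      rw [hD'img]
      exact hSbig
    have hdS : dich κ S := dich_mono diff_subset hdT
    have hdD' : dich κ (G '' (D' ∩ Q)) := by rw [hD'img]; exact hdS
    obtain ⟨q1, ⟨hq1D, hq1Q⟩, hq1val⟩ := conc_point hκ hGQ hL hGo hQ hD'c hD'big hdD'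
    set x₁ := G q1 with hx₁
    have hx₁S : x₁ ∈ S := by
      rw [← hD'img]
      exact ⟨q1, ⟨hq1D, hq1Q⟩, rfl⟩
    have haeq : ∀ f : X → unitInterval, Continuous f → aconc κ T f = aconc κ S f := by
      intro f hf
      by_contra hne
      set εv := |aconc κ T f - aconc κ S f| / 2 with hεv
      have hεpos : 0 < εv := by
        have := abs_pos.2 (sub_ne_zero.2 hne)
        positivity
      have h1 : #↥(S \ {x | |(f x : ℝ) - aconc κ T f| < εv}) ≤ κ :=
        le_trans (mk_le_mk_of_subset (diff_subset_diff_left diff_subset))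
          (conc_small hκ hTbig hdT hf hεpos)
      have h2 : #↥(S \ {x | |(f x : ℝ) - aconc κ S f| < εv}) ≤ κ :=
        conc_small hκ hSbig hdS hf hεpos
      have hsub : S ⊆ (S \ {x | |(f x : ℝ) - aconc κ T f| < εv}) ∪
          (S \ {x | |(f x : ℝ) - aconc κ S f| < εv}) := by
        intro x hx
        by_cases hb1 : |(f x : ℝ) - aconc κ T f| < εv
        · refine Or.inr ⟨hx, fun hb2 => ?_⟩
          have hb2' : |(f x : ℝ) - aconc κ S f| < εv := hb2
          have : |aconc κ T f - aconc κ S f| < 2 * εv := by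
            calc |aconc κ T f - aconc κ S f|
                ≤ |(f x : ℝ) - aconc κ T f| + |(f x : ℝ) - aconc κ S f| := by
                  rw [abs_sub_comm ((f x : ℝ)) (aconc κ T f)]
                  exact abs_sub_le _ _ _
              _ < 2 * εv := by linarith
          rw [hεv] at this
          linarith [abs_nonneg (aconc κ T f - aconc κ S f)]
        · exact Or.inl ⟨hx, hb1⟩
      have : #↥S ≤ κ :=
        le_trans (mk_le_mk_of_subset hsub)
          (le_trans (mk_union_le _ _) (Cardinal.add_le_of_le hκ h1 h2))
      exact absurd this (not_le.2 hSbig)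
    have hxeq : x₀ = x₁ := by
      by_contra hne
      obtain ⟨f, hf, hf0, hf1⟩ := hFH x₀ x₁ hne
      have e0 : ((f x₀ : ℝ)) = aconc κ T f := hq0val f hf
      have e1 : ((f x₁ : ℝ)) = aconc κ (G '' (D' ∩ Q)) f := hq1val f hf
      rw [hD'img] at e1
      rw [hf0] at e0
      rw [hf1] at e1
      have := haeq f hf
      rw [← e0, ← e1] at this
      norm_num at this
    exact hx₁S.2 (hxeq ▸ hx₀U)

def nodeFun (F : Set K → ℕ → Set K × Set K) : ℕ → (ℕ → Bool) → Set K
  | 0, _ => Set.univ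
  | n + 1, b => if b n then (F (nodeFun F n b) n).2 else (F (nodeFun F n b) n).1

theorem main {κ : Cardinal.{u}} (hκ : ℵ₀ ≤ κ) {G : K → X} {Q : Set K} {Gn : ℕ → Set K}
    (hGQ : ContinuousOn G Q)
    (hGo : ∀ n, IsOpen (Gn n)) (hQ : Q = ⋂ n, Gn n)
    (hsurj : G '' Q = Set.univ)
    (hFH : FunctionallyHausdorff X)
    (hpsi : ∀ x : X, ∃ 𝒰 : Set (Set X), #↥𝒰 ≤ κ ∧ (∀ U ∈ 𝒰, IsOpen U ∧ x ∈ U) ∧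
      ⋂₀ 𝒰 = {x})
    (hL : ∀ C : Set K, IsClosed C → ∀ 𝒱 : Set (Set K), (∀ V ∈ 𝒱, IsOpen V) →
      C ∩ Q ⊆ ⋃₀ 𝒱 → ∃ 𝒱' ⊆ 𝒱, #↥𝒱' ≤ κ ∧ C ∩ Q ⊆ ⋃₀ 𝒱')
    (hX : κ < #X) : Cardinal.continuum ≤ #X := by
  have hQsub : ∀ n, Q ⊆ Gn n := fun n q hq => by rw [hQ] at hq; exact mem_iInter.1 hq n
  have hstep : ∀ (C : Set K) (n : ℕ), ∃ p : Set K × Set K,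
      (IsClosed C ∧ big κ G Q C) → (IsClosed p.1 ∧ IsClosed p.2 ∧ p.1 ⊆ C ∧ p.2 ⊆ C ∧
        p.1 ⊆ Gn n ∧ p.2 ⊆ Gn n ∧ big κ G Q p.1 ∧ big κ G Q p.2 ∧
        (G '' (p.1 ∩ Q)) ∩ (G '' (p.2 ∩ Q)) = ∅) := by
    intro C n
    by_cases h : IsClosed C ∧ big κ G Q C
    · obtain ⟨C₀, C₁, hc0, hc1, hs0, hs1, hb0, hb1, hdisj⟩ :=
        split hκ hGQ hL hGo hQ hFH hpsi h.1 h.2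
      obtain ⟨C₀', hc0', hs0', hg0', hb0'⟩ :=
        shrink hκ hL hc0 hb0 (hGo n) (fun q hq => hQsub n hq.2)
      obtain ⟨C₁', hc1', hs1', hg1', hb1'⟩ :=
        shrink hκ hL hc1 hb1 (hGo n) (fun q hq => hQsub n hq.2)
      refine ⟨(C₀', C₁'), fun _ => ⟨hc0', hc1', hs0'.trans hs0, hs1'.trans hs1,
        hg0', hg1', hb0', hb1', ?_⟩⟩
      rw [eq_empty_iff_forall_notMem]
      rintro x ⟨hx0, hx1⟩
      rw [eq_empty_iff_forall_notMem] at hdisj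
      refine hdisj x ⟨?_, ?_⟩
      · exact image_mono (inter_subset_inter_left _ hs0') hx0
      · exact image_mono (inter_subset_inter_left _ hs1') hx1
    · exact ⟨(∅, ∅), fun h' => absurd h' h⟩
  choose F hF using hstep
  set node := nodeFun F with hnode
  have hnode0 : ∀ b, node 0 b = Set.univ := fun _ => rfl
  have hnodeS : ∀ n b, node (n + 1) b =
      if b n then (F (node n b) n).2 else (F (node n b) n).1 := fun _ _ => rfl
  have hnodeT : ∀ n b, b n = true → node (n + 1) b = (F (node n b) n).2 := by
    intro n b hb; rw [hnodeS n b, if_pos hb]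
  have hnodeF : ∀ n b, b n = false → node (n + 1) b = (F (node n b) n).1 := by
    intro n b hb; rw [hnodeS n b, if_neg (by simp [hb])]
  have hGood : ∀ n b, IsClosed (node n b) ∧ big κ G Q (node n b) := by
    intro n
    induction n with
    | zero =>
      intro b
      refine ⟨isClosed_univ, ?_⟩
      show κ < #↥(G '' (Set.univ ∩ Q))
      rw [univ_inter, hsurj, mk_univ]
      exact hX
    | succ n ih =>
      intro b
      have h := hF (node n b) n (ih b)
      rcases Bool.eq_false_or_eq_true (b n) with hb | hb
      · rw [hnodeT n b hb]; exact ⟨h.2.1, h.2.2.2.2.2.2.2.1⟩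
      · rw [hnodeF n b hb]; exact ⟨h.1, h.2.2.2.2.2.2.1⟩
  have hsub : ∀ n b, node (n + 1) b ⊆ node n b := by
    intro n b
    have h := hF (node n b) n (hGood n b)
    rcases Bool.eq_false_or_eq_true (b n) with hb | hb
    · rw [hnodeT n b hb]; exact h.2.2.2.1
    · rw [hnodeF n b hb]; exact h.2.2.1
  have hsubGn : ∀ n b, node (n + 1) b ⊆ Gn n := by
    intro n b
    have h := hF (node n b) n (hGood n b)
    rcases Bool.eq_false_or_eq_true (b n) with hb | hb
    · rw [hnodeT n b hb]; exact h.2.2.2.2.2.1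
    · rw [hnodeF n b hb]; exact h.2.2.2.2.1
  have hdep : ∀ n b b', (∀ i, i < n → b i = b' i) → node n b = node n b' := by
    intro n
    induction n with
    | zero => intro b b' _; rw [hnode0, hnode0]
    | succ n ih =>
      intro b b' hagree
      rw [hnodeS n b, hnodeS n b',
        ih b b' (fun i hi => hagree i (Nat.lt_succ_of_lt hi)),
        hagree n (Nat.lt_succ_self n)]
  have hdisj : ∀ n b b', (∀ i, i < n → b i = b' i) → b n ≠ b' n →
      (G '' (node (n + 1) b ∩ Q)) ∩ (G '' (node (n + 1) b' ∩ Q)) = ∅ := by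
    intro n b b' hagree hne
    have hpar : node n b' = node n b := (hdep n b b' hagree).symm
    have h := hF (node n b) n (hGood n b)
    have hd := h.2.2.2.2.2.2.2.2
    rcases Bool.eq_false_or_eq_true (b n) with hb | hb
    · have hb' : b' n = false := by
        rcases Bool.eq_false_or_eq_true (b' n) with h' | h'
        · exact absurd (hb.trans h'.symm) hne
        · exact h'
      rw [hnodeT n b hb, hnodeF n b' hb', hpar]
      rw [eq_empty_iff_forall_notMem] at hd ⊢
      exact fun x hx => hd x ⟨hx.2, hx.1⟩
    · have hb' : b' n = true := by
        rcases Bool.eq_false_or_eq_true (b' n) with h' | h'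
        · exact h'
        · exact absurd (hb.trans h'.symm) hne
      rw [hnodeF n b hb, hnodeT n b' hb', hpar]
      rw [eq_empty_iff_forall_notMem] at hd ⊢
      exact fun x hx => hd x ⟨hx.1, hx.2⟩
  have hbranch : ∀ b : ℕ → Bool, (⋂ n, node n b).Nonempty := by
    intro b
    apply IsCompact.nonempty_iInter_of_sequence_nonempty_isCompact_isClosed
      (fun n => node n b) (fun n => hsub n b)
      (fun n => big_nonempty (hGood n b).2)
      ((hGood 0 b).1.isCompact)
      (fun n => (hGood n b).1)
  choose qb hqb using hbranch
  have hqbn : ∀ b n, qb b ∈ node n b := by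
    intro b n
    have := hqb b
    rw [mem_iInter] at this
    exact this n
  have hqbQ : ∀ b, qb b ∈ Q := by
    intro b
    rw [hQ]
    exact mem_iInter.2 fun n => hsubGn n b (hqbn b (n + 1))
  have hinj : Function.Injective (fun b : ℕ → Bool => G (qb b)) := by
    intro b b' hbb
    by_contra hne
    have hexn : ∃ n, b n ≠ b' n := by
      by_contra hall
      push_neg at hall
      exact hne (funext hall)
    set n := Nat.find hexn with hn
    have hagree : ∀ i, i < n → b i = b' i := fun i hi => of_not_not (Nat.find_min hexn hi)
    have hd := hdisj n b b' hagree (Nat.find_spec hexn)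
    rw [eq_empty_iff_forall_notMem] at hd
    refine hd (G (qb b)) ⟨⟨qb b, ⟨hqbn b (n + 1), hqbQ b⟩, rfl⟩, ?_⟩
    exact ⟨qb b', ⟨hqbn b' (n + 1), hqbQ b'⟩, hbb.symm⟩
  have hle : Cardinal.lift.{u} #(ℕ → Bool) ≤ Cardinal.lift.{0} #X :=
    Cardinal.lift_mk_le'.2 ⟨⟨fun b => G (qb b), hinj⟩⟩
  have hck : #(ℕ → Bool) = Cardinal.continuum.{0} := by
    rw [← Cardinal.power_def, Cardinal.mk_bool, Cardinal.mk_nat, Cardinal.two_power_aleph0]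
  rw [hck, Cardinal.lift_continuum, Cardinal.lift_uzero] at hle
  exact hle

end Stmt5Aux

theorem stmt5 {X P : Type u} [TopologicalSpace X] [TopologicalSpace P]
    (hX : FunctionallyHausdorff X) (hP : IsCechComplete P)
    (g : P → X) (hg : Continuous g) (hgs : Function.Surjective g) :
    #X ≤ max (lindelofNumber P) (pseudocharacter X) ∨ Cardinal.continuum ≤ #X := by
  by_cases hle : #X ≤ max (lindelofNumber P) (pseudocharacter X)
  · exact Or.inl hle
  right
  set κ := max (lindelofNumber P) (pseudocharacter X) with hκdef
  have hLmem : ℵ₀ ≤ lindelofNumber P ∧ ∀ U : Set (Set P), (∀ u ∈ U, IsOpen u) →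
      ⋃₀ U = Set.univ → ∃ V ⊆ U, #↥V ≤ lindelofNumber P ∧ ⋃₀ V = Set.univ := by
    have hne : {c : Cardinal.{u} | ℵ₀ ≤ c ∧ ∀ U : Set (Set P), (∀ u ∈ U, IsOpen u) →
        ⋃₀ U = Set.univ → ∃ V ⊆ U, #↥V ≤ c ∧ ⋃₀ V = Set.univ}.Nonempty :=
      ⟨max ℵ₀ #(Set P), le_max_left _ _, fun U _ hUcov =>
        ⟨U, Subset.rfl, le_trans (Cardinal.mk_set_le U) (le_max_right _ _), hUcov⟩⟩
    exact csInf_mem hne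
  have hPmem : ℵ₀ ≤ pseudocharacter X ∧ ∀ x : X, ∃ 𝒰 : Set (Set X),
      #↥𝒰 ≤ pseudocharacter X ∧ (∀ U ∈ 𝒰, IsOpen U ∧ x ∈ U) ∧
      ⋂₀ 𝒰 = ⋂₀ {U : Set X | IsOpen U ∧ x ∈ U} := by
    have hne : {c : Cardinal.{u} | ℵ₀ ≤ c ∧ ∀ x : X, ∃ 𝒰 : Set (Set X),
        #↥𝒰 ≤ c ∧ (∀ U ∈ 𝒰, IsOpen U ∧ x ∈ U) ∧
        ⋂₀ 𝒰 = ⋂₀ {U : Set X | IsOpen U ∧ x ∈ U}}.Nonempty :=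
      ⟨max ℵ₀ #(Set X), le_max_left _ _, fun x =>
        ⟨{U : Set X | IsOpen U ∧ x ∈ U},
          le_trans (Cardinal.mk_set_le _) (le_max_right _ _), fun _ hU => hU, rfl⟩⟩
    exact csInf_mem hne
  have hκinf : ℵ₀ ≤ κ := le_trans hLmem.1 (le_max_left _ _)
  have hXbig : κ < #X := not_le.1 hle
  obtain ⟨K, tK, e, hcomp, ht2, hemb, hdense, hGδ⟩ := hP
  classical
  obtain ⟨Gn, hGo, hQeq⟩ : ∃ Gn : ℕ → Set K, (∀ n, IsOpen (Gn n)) ∧ Set.range e = ⋂ n, Gn n := by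
    obtain ⟨Tset, hTopen, hTcount, hTeq⟩ := hGδ
    rcases Tset.eq_empty_or_nonempty with hT | hT
    · refine ⟨fun _ => Set.univ, fun _ => isOpen_univ, ?_⟩
      rw [hTeq, hT]
      simp
    · obtain ⟨Fs, hFs⟩ := hTcount.exists_eq_range hT
      refine ⟨Fs, fun n => hTopen _ (hFs ▸ Set.mem_range_self n), ?_⟩
      rw [hTeq, hFs, sInter_range]
  have hXne : Nonempty X := by
    rw [← Cardinal.mk_ne_zero_iff]
    exact (lt_of_lt_of_le Cardinal.aleph0_pos (hκinf.trans hXbig.le)).ne'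
  set G : K → X := fun k => if h : k ∈ Set.range e then g (Classical.choose h)
    else Classical.choice hXne with hGdef
  have hGval : ∀ (k : K) (h : k ∈ Set.range e), G k = g (Classical.choose h) := by
    intro k h
    simp only [hGdef]
    rw [dif_pos h]
  have hGQ : ContinuousOn G (Set.range e) := by
    rw [continuousOn_iff_continuous_restrict]
    have heq : (Set.range e).domRestrict G = g ∘ (hemb.toHomeomorph).symm := by
      funext y
      have hy : (y : K) ∈ Set.range e := y.2
      show G (y : K) = g ((hemb.toHomeomorph).symm y)
      rw [hGval _ hy]
      congr 1
      apply hemb.injective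
      rw [Classical.choose_spec hy]
      exact (Equiv.apply_ofInjective_symm hemb.injective y).symm
    rw [heq]
    exact hg.comp (Homeomorph.continuous _)
  have hsurj : G '' Set.range e = Set.univ := by
    rw [eq_univ_iff_forall]
    intro x
    obtain ⟨p, hp⟩ := hgs x
    have hq : e p ∈ Set.range e := ⟨p, rfl⟩
    refine ⟨e p, hq, ?_⟩
    rw [hGval _ hq, ← hp]
    congr 1
    exact hemb.injective (Classical.choose_spec hq)
  have hT1 : ∀ x : X, ⋂₀ {U : Set X | IsOpen U ∧ x ∈ U} = {x} := by
    intro x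
    apply Subset.antisymm
    · intro y hy
      rw [mem_singleton_iff]
      by_contra hne
      obtain ⟨f, hf, hfx, hfy⟩ := hX x y (fun h => hne h.symm)
      have hUopen : IsOpen {z : X | ((f z : ℝ)) < 1 / 2} :=
        IsOpen.preimage (continuous_subtype_val.comp hf) isOpen_Iio
      have hxU : x ∈ {z : X | ((f z : ℝ)) < 1 / 2} := by
        show ((f x : ℝ)) < 1 / 2
        rw [hfx]
        norm_num
      have hyU := hy _ ⟨hUopen, hxU⟩
      have : ((f y : ℝ)) < 1 / 2 := hyU
      rw [hfy] at this
      norm_num at this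
    · intro y hy U hU
      rw [mem_singleton_iff] at hy
      rw [hy]
      exact hU.2
  have hpsi : ∀ x : X, ∃ 𝒰 : Set (Set X), #↥𝒰 ≤ κ ∧ (∀ U ∈ 𝒰, IsOpen U ∧ x ∈ U) ∧
      ⋂₀ 𝒰 = {x} := by
    intro x
    obtain ⟨𝒰, hc, ho, hi⟩ := hPmem.2 x
    exact ⟨𝒰, hc.trans (le_max_right _ _), ho, hi.trans (hT1 x)⟩
  have hL : ∀ C : Set K, IsClosed C → ∀ 𝒱 : Set (Set K), (∀ V ∈ 𝒱, IsOpen V) →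
      C ∩ Set.range e ⊆ ⋃₀ 𝒱 → ∃ 𝒱' ⊆ 𝒱, #↥𝒱' ≤ κ ∧ C ∩ Set.range e ⊆ ⋃₀ 𝒱' := by
    intro C hC 𝒱 h𝒱 hcov
    set U : Set (Set P) := (fun V => e ⁻¹' V) '' 𝒱 ∪ {e ⁻¹' Cᶜ} with hUdef
    have hUopen : ∀ u ∈ U, IsOpen u := by
      rintro u (⟨V, hV, rfl⟩ | rfl)
      · exact IsOpen.preimage hemb.continuous (h𝒱 V hV)
      · exact IsOpen.preimage hemb.continuous hC.isOpen_compl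
    have hUcov : ⋃₀ U = Set.univ := by
      rw [eq_univ_iff_forall]
      intro p
      by_cases hp : e p ∈ C
      · rcases hcov ⟨hp, Set.mem_range_self p⟩ with ⟨V, hV, hV'⟩
        exact ⟨e ⁻¹' V, Or.inl ⟨V, hV, rfl⟩, hV'⟩
      · exact ⟨e ⁻¹' Cᶜ, Or.inr rfl, hp⟩
    obtain ⟨V', hV'U, hV'card, hV'cov⟩ := hLmem.2 U hUopen hUcov
    classical
    set c : Set P → Set K := fun u =>
      if h : ∃ V ∈ 𝒱, e ⁻¹' V = u then Classical.choose h else ∅ with hcdef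
    refine ⟨c '' (V' ∩ {u | ∃ V ∈ 𝒱, e ⁻¹' V = u}), ?_, ?_, ?_⟩
    · rintro W ⟨u, ⟨huV', hu⟩, rfl⟩
      have h1 : c u = Classical.choose hu := dif_pos hu
      rw [h1]
      exact (Classical.choose_spec hu).1
    · refine le_trans Cardinal.mk_image_le ?_
      refine le_trans (Cardinal.mk_le_mk_of_subset inter_subset_left) ?_
      exact hV'card.trans (le_max_left _ _)
    · rintro q ⟨hqC, hqQ⟩
      obtain ⟨p, rfl⟩ := hqQ
      have hp : p ∈ ⋃₀ V' := by
        rw [hV'cov]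
        exact mem_univ p
      obtain ⟨u, huV', hpu⟩ := hp
      by_cases hu : ∃ V ∈ 𝒱, e ⁻¹' V = u
      · refine ⟨c u, ⟨u, ⟨huV', hu⟩, rfl⟩, ?_⟩
        have h1 : c u = Classical.choose hu := dif_pos hu
        have h2 := Classical.choose_spec hu
        rw [h1]
        rw [← h2.2] at hpu
        exact hpu
      · exfalso
        rcases hV'U huV' with ⟨V, hV, hVu⟩ | hCc
        · exact hu ⟨V, hV, hVu⟩
        · rw [mem_singleton_iff] at hCc
          rw [hCc] at hpu
          exact hpu hqC
  exact Stmt5Aux.main hκinf hGQ hGo hQeq hsurj hX hpsi hL hXbig
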